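/- arXiv:2307.02793 — 5 statements merged into one kernel-verified Lean document; each statement's English description precedes it below -/
import Mathlib

section
/- For the mixture measure μ(η₁) = (1/(ρ_B - ρ_A)) ∫_{ρ_A}^{ρ_B} G_m(η₁) dm with 0 < ρ_A < ρ_B, the generating function identity Σ_{η₁=0}^∞ λ^{η₁} μ(η₁) · Σ_{k=1}^{η₁} (2/k) = (1/(ρ_B-ρ_A)) ∫_{ρ_A}^{ρ_B} [2·log(1+m) + 2·log F_m(λ)] F_m(λ) dm holds for all λ ∈ [0,1). -/
noncomputable def geomPMF (m : ℝ) (k : ℕ) : ℝ := (1 / (1 + m)) * (m / (1 + m)) ^ k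

noncomputable def geomMGF (m l : ℝ) : ℝ := (1 + (1 - l) * m)⁻¹

open Finset MeasureTheory

lemma hasSum_harmonic_geom {x : ℝ} (hx0 : 0 ≤ x) (hx1 : x < 1) :
    HasSum (fun n : ℕ => x ^ n * ∑ k ∈ Finset.Icc 1 n, (k : ℝ)⁻¹)
      (-Real.log (1 - x) / (1 - x)) := by
  set a : ℕ → ℝ := fun n => x ^ n / n with ha_def
  set b : ℕ → ℝ := fun n => x ^ n with hb_def
  have hx : |x| < 1 := by rwa [abs_of_nonneg hx0]
  have ha : HasSum a (-Real.log (1 - x)) := by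
    have h := Real.hasSum_pow_div_log_of_abs_lt_one hx
    have h2 : HasSum (fun n => a (n + 1)) (-Real.log (1 - x)) := by
      convert h using 2 with n
      simp [ha_def]
    have := (hasSum_nat_add_iff 1).mp h2
    simpa [ha_def] using this
  have hb : HasSum b (1 - x)⁻¹ := hasSum_geometric_of_lt_one hx0 hx1
  have hna : Summable fun n => ‖a n‖ := by
    have : ∀ n, ‖a n‖ = a n := fun n =>
      Real.norm_of_nonneg (div_nonneg (pow_nonneg hx0 n) (Nat.cast_nonneg n))
    simpa [this] using ha.summable
  have hnb : Summable fun n => ‖b n‖ := by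
    have : ∀ n, ‖b n‖ = b n := fun n => Real.norm_of_nonneg (pow_nonneg hx0 n)
    simpa [this] using hb.summable
  have hc : ∀ n, ∑ kl ∈ Finset.HasAntidiagonal.antidiagonal n, a kl.1 * b kl.2
      = x ^ n * ∑ k ∈ Finset.Icc 1 n, (k : ℝ)⁻¹ := by
    intro n
    rw [Finset.Nat.sum_antidiagonal_eq_sum_range_succ_mk]
    have h1 : ∀ k ∈ Finset.range (n + 1), a k * b (n - k) = x ^ n * (k : ℝ)⁻¹ := by
      intro k hk
      have hkn : k ≤ n := Nat.lt_succ_iff.mp (Finset.mem_range.mp hk)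
      simp only [ha_def, hb_def]
      rw [div_mul_eq_mul_div, ← pow_add, Nat.add_sub_cancel' hkn]
      ring
    rw [Finset.sum_congr rfl h1, ← Finset.mul_sum]
    congr 1
    rw [show Finset.range (n + 1) = insert 0 (Finset.Icc 1 n) by ext k; simp; omega,
      Finset.sum_insert (by simp)]
    simp
  have hsum : Summable fun n => ∑ kl ∈ Finset.HasAntidiagonal.antidiagonal n, a kl.1 * b kl.2 :=
    (summable_norm_sum_mul_antidiagonal_of_summable_norm hna hnb).of_norm
  have htsum := tsum_mul_tsum_eq_tsum_sum_antidiagonal_of_summable_norm hna hnb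
  rw [ha.tsum_eq, hb.tsum_eq] at htsum
  have : HasSum (fun n => ∑ kl ∈ Finset.HasAntidiagonal.antidiagonal n, a kl.1 * b kl.2)
      (-Real.log (1 - x) / (1 - x)) := by
    rw [hsum.hasSum_iff, ← htsum]
    rw [div_eq_mul_inv]
  simpa [hc] using this

lemma per_m (m : ℝ) (hm : 0 < m) (l : ℝ) (hl0 : 0 ≤ l) (hl1 : l < 1) :
    HasSum (fun η : ℕ => l ^ η * geomPMF m η * (∑ k ∈ Finset.Icc 1 η, 2 / (k : ℝ)))
      ((2 * Real.log (1 + m) + 2 * Real.log (geomMGF m l)) * geomMGF m l) := by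
  have hA : (0 : ℝ) < 1 + m := by linarith
  have hB : (0 : ℝ) < 1 + (1 - l) * m := by nlinarith
  set x : ℝ := l * (m / (1 + m)) with hx_def
  have hq0 : 0 ≤ m / (1 + m) := div_nonneg hm.le hA.le
  have hq1 : m / (1 + m) < 1 := (div_lt_one hA).mpr (by linarith)
  have hx0 : 0 ≤ x := mul_nonneg hl0 hq0
  have hx1 : x < 1 := lt_of_le_of_lt (by nlinarith : x ≤ m / (1 + m)) hq1
  have h := (hasSum_harmonic_geom hx0 hx1).mul_left (2 / (1 + m))
  have hfun : (fun n : ℕ => (2 / (1 + m)) * (x ^ n * ∑ k ∈ Finset.Icc 1 n, (k : ℝ)⁻¹))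
      = fun η : ℕ => l ^ η * geomPMF m η * (∑ k ∈ Finset.Icc 1 η, 2 / (k : ℝ)) := by
    funext n
    have : ∑ k ∈ Finset.Icc 1 n, 2 / (k : ℝ) = 2 * ∑ k ∈ Finset.Icc 1 n, (k : ℝ)⁻¹ := by
      simp [Finset.mul_sum, div_eq_mul_inv]
    rw [this, geomPMF, hx_def, mul_pow]
    ring
  rw [hfun] at h
  refine (congrArg (HasSum _) ?_).mpr h
  have h1x : 1 - x = (1 + (1 - l) * m) / (1 + m) := by
    rw [hx_def]
    field_simp [hx_def]
    ring
  rw [h1x, Real.log_div hB.ne' hA.ne', geomMGF, Real.log_inv]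
  field_simp
  ring

theorem mixture_gen_fun_identity (ρA ρB : ℝ) (hA : 0 < ρA) (hAB : ρA < ρB)
    (μ : ℕ → ℝ) (hμ : ∀ η, μ η = (1 / (ρB - ρA)) * ∫ m in ρA..ρB, geomPMF m η)
    (l : ℝ) (hl0 : 0 ≤ l) (hl1 : l < 1) :
    ∑' η : ℕ, l ^ η * μ η * (∑ k ∈ Finset.Icc 1 η, 2 / (k : ℝ)) =
      (1 / (ρB - ρA)) *
        ∫ m in ρA..ρB, (2 * Real.log (1 + m) + 2 * Real.log (geomMGF m l)) * geomMGF m l := by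
  have hΔ : 0 < ρB - ρA := sub_pos.mpr hAB
  set f : ℕ → ℝ → ℝ :=
    fun η m => l ^ η * geomPMF m η * (∑ k ∈ Finset.Icc 1 η, 2 / (k : ℝ)) with hf_def
  have step1 : ∀ η : ℕ, l ^ η * μ η * (∑ k ∈ Finset.Icc 1 η, 2 / (k : ℝ))
      = (1 / (ρB - ρA)) * ∫ m in Set.Ioc ρA ρB, f η m := by
    intro η
    rw [hμ, intervalIntegral.integral_of_le hAB.le]
    have : ∫ m in Set.Ioc ρA ρB, f η m
        = (l ^ η * (∑ k ∈ Finset.Icc 1 η, 2 / (k : ℝ))) * ∫ m in Set.Ioc ρA ρB, geomPMF m η := by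
      rw [← MeasureTheory.integral_const_mul]
      congr 1
      funext m
      simp only [hf_def]
      ring
    rw [this]
    ring
  have hmeas : ∀ η : ℕ, AEStronglyMeasurable (f η)
      (volume.restrict (Set.Ioc ρA ρB)) := by
    intro η
    apply Measurable.aestronglyMeasurable
    simp only [hf_def, geomPMF]
    fun_prop
  have hbound : ∑' η : ℕ, ∫⁻ m in Set.Ioc ρA ρB, ‖f η m‖₊ ∂volume ≠ ⊤ := by
    have key : ∀ η : ℕ, ∫⁻ m in Set.Ioc ρA ρB, ‖f η m‖₊ ∂volume
        ≤ ENNReal.ofReal (2 * η * l ^ η) * ENNReal.ofReal (ρB - ρA) := by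
      intro η
      have hb : ∀ m ∈ Set.Ioc ρA ρB, (‖f η m‖₊ : ENNReal)
          ≤ ENNReal.ofReal (2 * η * l ^ η) := by
        intro m hm
        have hm0 : 0 < m := hA.trans hm.1
        have hAm : (0 : ℝ) < 1 + m := by linarith
        have hpmf0 : 0 ≤ geomPMF m η := mul_nonneg (by positivity)
          (pow_nonneg (div_nonneg hm0.le hAm.le) η)
        have hpmf1 : geomPMF m η ≤ 1 := by
          rw [geomPMF]
          have h1 : 1 / (1 + m) ≤ 1 := by
            rw [div_le_one hAm]; linarith
          have h2 : (m / (1 + m)) ^ η ≤ 1 :=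
            pow_le_one₀ (div_nonneg hm0.le hAm.le) (by rw [div_le_one hAm]; linarith)
          calc 1 / (1 + m) * (m / (1 + m)) ^ η ≤ 1 * 1 :=
                mul_le_mul h1 h2 (by positivity) one_pos.le
            _ = 1 := by ring
        have hsum0 : 0 ≤ ∑ k ∈ Finset.Icc 1 η, 2 / (k : ℝ) :=
          Finset.sum_nonneg fun k _ => by positivity
        have hsum1 : ∑ k ∈ Finset.Icc 1 η, 2 / (k : ℝ) ≤ 2 * η := by
          calc ∑ k ∈ Finset.Icc 1 η, 2 / (k : ℝ) ≤ ∑ k ∈ Finset.Icc 1 η, 2 := by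
                apply Finset.sum_le_sum
                intro k hk
                have hk1 : 1 ≤ k := (Finset.mem_Icc.mp hk).1
                have : (1 : ℝ) ≤ k := by exact_mod_cast hk1
                rw [div_le_iff₀ (by linarith)]
                nlinarith
            _ = 2 * η := by
                rw [Finset.sum_const, Nat.card_Icc]
                simp [mul_comm]
        rw [← ENNReal.ofReal_coe_nnreal, coe_nnnorm]
        apply ENNReal.ofReal_le_ofReal
        have : ‖f η m‖ = f η m := Real.norm_of_nonneg
          (mul_nonneg (mul_nonneg (pow_nonneg hl0 η) hpmf0) hsum0)
        rw [this, hf_def]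
        have hle1 : l ^ η ≤ 1 := pow_le_one₀ hl0 hl1.le
        calc l ^ η * geomPMF m η * (∑ k ∈ Finset.Icc 1 η, 2 / (k : ℝ))
            ≤ l ^ η * 1 * (2 * η) := by
              apply mul_le_mul
              · exact mul_le_mul_of_nonneg_left hpmf1 (pow_nonneg hl0 η)
              · exact hsum1
              · exact hsum0
              · positivity
          _ = 2 * η * l ^ η := by ring
      calc ∫⁻ m in Set.Ioc ρA ρB, ‖f η m‖₊ ∂volume
          ≤ ∫⁻ _ in Set.Ioc ρA ρB, ENNReal.ofReal (2 * η * l ^ η) ∂volume :=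
            MeasureTheory.setLIntegral_mono measurable_const hb
        _ = ENNReal.ofReal (2 * η * l ^ η) * ENNReal.ofReal (ρB - ρA) := by
            rw [MeasureTheory.setLIntegral_const, Real.volume_Ioc]
    have hsummable : Summable (fun η : ℕ => 2 * (η : ℝ) * l ^ η) := by
      have := (summable_pow_mul_geometric_of_norm_lt_one 1
        (by rwa [Real.norm_of_nonneg hl0] : ‖l‖ < 1)).mul_left 2
      simpa [pow_one, mul_assoc] using this
    have hne : ∑' η : ℕ, ENNReal.ofReal (2 * (η : ℝ) * l ^ η) ≠ ⊤ := by
      rw [← ENNReal.ofReal_tsum_of_nonneg (fun η => by positivity) hsummable]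
      exact ENNReal.ofReal_ne_top
    apply ne_top_of_le_ne_top (b := (∑' η : ℕ, ENNReal.ofReal (2 * (η : ℝ) * l ^ η))
      * ENNReal.ofReal (ρB - ρA))
    · exact ENNReal.mul_ne_top hne ENNReal.ofReal_ne_top
    · rw [← ENNReal.tsum_mul_right]
      exact ENNReal.tsum_le_tsum key
  calc ∑' η : ℕ, l ^ η * μ η * (∑ k ∈ Finset.Icc 1 η, 2 / (k : ℝ))
      = ∑' η : ℕ, (1 / (ρB - ρA)) * ∫ m in Set.Ioc ρA ρB, f η m := tsum_congr step1
    _ = (1 / (ρB - ρA)) * ∑' η : ℕ, ∫ m in Set.Ioc ρA ρB, f η m := tsum_mul_left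
    _ = (1 / (ρB - ρA)) * ∫ m in Set.Ioc ρA ρB, ∑' η : ℕ, f η m := by
        rw [MeasureTheory.integral_tsum hmeas hbound]
    _ = (1 / (ρB - ρA)) *
        ∫ m in ρA..ρB, (2 * Real.log (1 + m) + 2 * Real.log (geomMGF m l)) * geomMGF m l := by
        rw [intervalIntegral.integral_of_le hAB.le]
        congr 1
        apply MeasureTheory.setIntegral_congr_fun measurableSet_Ioc
        intro m hm
        exact (per_m m (hA.trans hm.1) l hl0 hl1).tsum_eq
end

section
/- For 0 < β < 1 and m > 0 with ρ = β/(1-β), the identity Σ_{η=0}^∞ λ^η Σ_{k=1}^η G_m(η-k)·(β^k/k) = [log(1+ρ) + log F_ρ(λ)] · F_m(λ) holds for all λ ∈ [0,1), where F_m(λ) = (1+(1-λ)m)^{-1} and F_ρ(λ) = (1+(1-λ)ρ)^{-1}. -/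
theorem convolution_gen_fun (β : ℝ) (hβ0 : 0 < β) (hβ1 : β < 1) (m : ℝ) (hm : 0 < m)
    (ρ : ℝ) (hρ : ρ = β / (1 - β)) (l : ℝ) (hl0 : 0 ≤ l) (hl1 : l < 1) :
    ∑' η : ℕ, l ^ η * (∑ k ∈ Finset.Icc 1 η, geomPMF m (η - k) * β ^ k / (k : ℝ)) =
      (Real.log (1 + ρ) + Real.log (geomMGF ρ l)) * geomMGF m l := by
  set x : ℝ := l * β with hxdef
  have hx0 : 0 ≤ x := mul_nonneg hl0 hβ0.le
  have hx1 : x < 1 := lt_of_le_of_lt (by nlinarith : x ≤ l) hl1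
  set g : ℕ → ℝ := fun k => x ^ k / k with hgdef
  set f : ℕ → ℝ := fun j => l ^ j * geomPMF m j with hfdef
  have h1m : (0:ℝ) < 1 + m := by linarith
  -- sum of f
  have hr0 : 0 ≤ l * m / (1 + m) := by positivity
  have hr1 : l * m / (1 + m) < 1 := by
    rw [div_lt_one h1m]; nlinarith
  have hf : HasSum f (geomMGF m l) := by
    have h := (hasSum_geometric_of_lt_one hr0 hr1).mul_left (1 / (1 + m))
    have heq : (fun j : ℕ => 1 / (1 + m) * (l * m / (1 + m)) ^ j) = f := by
      funext j
      simp only [hfdef, geomPMF, div_pow, mul_pow]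
      ring
    rw [heq] at h
    convert h using 1
    · rfl
    unfold geomMGF
    rw [one_div, ← mul_inv]
    congr 1
    field_simp
    ring
  -- sum of g
  have hg : HasSum g (-Real.log (1 - x)) := by
    have h := Real.hasSum_pow_div_log_of_abs_lt_one (x := x) (by rw [abs_of_nonneg hx0]; exact hx1)
    have h2 : HasSum (fun n : ℕ => g (n + 1)) (-Real.log (1 - x)) := by
      convert h using 2 with n
      simp [hgdef]
    have := (hasSum_nat_add_iff (f := g) 1).mp h2
    simpa [hgdef] using this
  -- nonneg and norm-summability
  have hfpos : ∀ j, 0 ≤ f j := by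
    intro j; simp only [hfdef, geomPMF]; positivity
  have hgpos : ∀ k, 0 ≤ g k := by
    intro k; simp only [hgdef]; positivity
  have hfn : Summable fun j => ‖f j‖ := by
    simpa [Real.norm_of_nonneg (hfpos _)] using hf.summable
  have hgn : Summable fun k => ‖g k‖ := by
    simpa [Real.norm_of_nonneg (hgpos _)] using hg.summable
  have hcauchy := tsum_mul_tsum_eq_tsum_sum_range_of_summable_norm hgn hfn
  rw [hg.tsum_eq, hf.tsum_eq] at hcauchy
  -- identify the LHS terms with the Cauchy product terms
  have hterm : ∀ n : ℕ, ∑ k ∈ Finset.range (n + 1), g k * f (n - k) =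
      l ^ n * (∑ k ∈ Finset.Icc 1 n, geomPMF m (n - k) * β ^ k / (k : ℝ)) := by
    intro n
    have hsub : Finset.Icc 1 n ⊆ Finset.range (n + 1) := by
      intro i hi
      simp only [Finset.mem_Icc] at hi
      simp only [Finset.mem_range]
      omega
    rw [← Finset.sum_subset hsub (by
      intro i hi hni
      simp only [Finset.mem_range] at hi
      simp only [Finset.mem_Icc] at hni
      have : i = 0 := by omega
      simp [this, hgdef])]
    rw [Finset.mul_sum]
    apply Finset.sum_congr rfl
    intro k hk
    simp only [Finset.mem_Icc] at hk
    have hpow : l ^ k * l ^ (n - k) = l ^ n := by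
      rw [← pow_add]; congr 1; omega
    simp only [hgdef, hfdef, hxdef, mul_pow]
    rw [← hpow]
    ring
  rw [tsum_congr fun n => (hterm n).symm, ← hcauchy]
  congr 1
  -- log identity
  have hb : (0:ℝ) < 1 - β := by linarith
  have hxne : (1:ℝ) - x ≠ 0 := by linarith
  have h1ρ : 1 + ρ = (1 - β)⁻¹ := by
    rw [hρ]; field_simp; ring
  have h2 : 1 + (1 - l) * ρ = (1 - x) / (1 - β) := by
    rw [hρ, hxdef]; field_simp; ring
  unfold geomMGF
  rw [h1ρ, h2, Real.log_inv, Real.log_inv, Real.log_div hxne (ne_of_gt hb)]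
  ring
end

section
/- Let 0 < ρ_A < ρ_B, N ≥ 1, and λ_1,...,λ_N ∈ [0,1). With F_m(λ) = (1+(1-λ)m)^{-1}, F_{m_0}(λ_1) := F_{ρ_A}(λ_1), F_{m_{N+1}}(λ_N) := F_{ρ_B}(λ_N), and O_N = {ρ_A ≤ m_1 ≤ ... ≤ m_N ≤ ρ_B}, it holds that Σ_{x=1}^N ∫_{O_N} [log F_{m_{x-1}}(λ_x) - 2·log F_{m_x}(λ_x) + log F_{m_{x+1}}(λ_x)] · Π_{y=1}^N F_{m_y}(λ_y) dm = 0. In fact each summand is zero. -/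
/-- Extension of a configuration `m : Fin N → ℝ` by the boundary values `a` at index `0`
and `b` at index `N+1`; index `i ∈ {1,…,N}` gives `m (i-1)`. -/
noncomputable def extSeq (a b : ℝ) (N : ℕ) (m : Fin N → ℝ) (i : ℕ) : ℝ :=
  if h : 1 ≤ i ∧ i ≤ N then m ⟨i - 1, by omega⟩ else if i = 0 then a else b

/-- The ordered simplex `{a ≤ m 0 ≤ … ≤ m (N-1) ≤ b}`. -/
def orderedSimplex (a b : ℝ) (N : ℕ) : Set (Fin N → ℝ) :=
  {m | Monotone m ∧ ∀ i, m i ∈ Set.Icc a b}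

open MeasureTheory

/-! ### Auxiliary lemmas -/

section Aux

lemma key_integral (s c d : ℝ) (hs : 0 < s) (hc : 0 < 1 + s * c) (hcd : c ≤ d) :
    ∫ t in c..d,
      (2 * Real.log (1 + s * t) - Real.log (1 + s * c) - Real.log (1 + s * d)) *
        (1 + s * t)⁻¹ = 0 := by
  have hpos : ∀ t ∈ Set.uIcc c d, 0 < 1 + s * t := by
    intro t ht
    rw [Set.uIcc_of_le hcd] at ht
    nlinarith [ht.1]
  set L : ℝ → ℝ := fun t => Real.log (1 + s * t) with hL
  have hderiv : ∀ t ∈ Set.uIcc c d,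
      HasDerivAt (fun u => (L u ^ 2 - (L c + L d) * L u) / s)
        ((2 * L t - L c - L d) * (1 + s * t)⁻¹) t := by
    intro t ht
    have h1 : HasDerivAt (fun u : ℝ => 1 + s * u) s t := by
      simpa using ((hasDerivAt_id t).const_mul s).const_add 1
    have h2 : HasDerivAt L (s / (1 + s * t)) t := h1.log (hpos t ht).ne'
    have h3 : HasDerivAt (fun u => (L u ^ 2 - (L c + L d) * L u) / s)
        ((2 * L t * (s / (1 + s * t)) - (L c + L d) * (s / (1 + s * t))) / s) t := by
      have := ((h2.pow 2).sub (h2.const_mul (L c + L d))).div_const s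
      refine this.congr_deriv ?_
      norm_num
    convert h3 using 1
    field_simp
    ring
  have hcont : ContinuousOn (fun t => (2 * L t - L c - L d) * (1 + s * t)⁻¹)
      (Set.uIcc c d) := by
    have hc1 : ContinuousOn (fun t : ℝ => 1 + s * t) (Set.uIcc c d) :=
      (continuous_const.add (continuous_const.mul continuous_id)).continuousOn
    have hLc : ContinuousOn L (Set.uIcc c d) := hc1.log fun t ht => (hpos t ht).ne'
    exact ((continuousOn_const.mul hLc).sub continuousOn_const).sub continuousOn_const |>.mul
      (hc1.inv₀ fun t ht => (hpos t ht).ne')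
  rw [intervalIntegral.integral_eq_sub_of_hasDerivAt hderiv (hcont.intervalIntegrable)]
  ring

lemma insertNth_apply_val {n : ℕ} (i : Fin (n + 1)) (t : ℝ) (y : Fin n → ℝ)
    (v : ℕ) (hv : v < n + 1) :
    (i.insertNth t y : Fin (n+1) → ℝ) ⟨v, hv⟩ =
      if h : v < (i : ℕ) then y ⟨v, by have := i.isLt; omega⟩
      else if h2 : v = (i : ℕ) then t
      else y ⟨v - 1, by omega⟩ := by
  split_ifs with h h2
  · have hs : i.succAbove ⟨v, by have := i.isLt; omega⟩ = ⟨v, hv⟩ := by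
      rw [Fin.succAbove_of_castSucc_lt]
      · rfl
      · simpa [Fin.lt_def] using h
    rw [← hs, Fin.insertNth_apply_succAbove]
  · have : (⟨v, hv⟩ : Fin (n + 1)) = i := Fin.ext h2
    rw [this, Fin.insertNth_apply_same]
  · have hs : i.succAbove ⟨v - 1, by omega⟩ = ⟨v, hv⟩ := by
      rw [Fin.succAbove_of_le_castSucc]
      · exact Fin.ext (by simp [Fin.succ]; omega)
      · rw [Fin.le_def]; simp [Fin.castSucc, Fin.castAdd, Fin.castLE]; omega
    rw [← hs, Fin.insertNth_apply_succAbove]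

/-- lower bound for the inserted coordinate -/
noncomputable def lbnd (a : ℝ) {n : ℕ} (i : Fin (n + 1)) (y : Fin n → ℝ) : ℝ :=
  if h : 0 < (i : ℕ) then y ⟨(i : ℕ) - 1, by have := i.isLt; omega⟩ else a

/-- upper bound for the inserted coordinate -/
noncomputable def ubnd (b : ℝ) {n : ℕ} (i : Fin (n + 1)) (y : Fin n → ℝ) : ℝ :=
  if h : (i : ℕ) < n then y ⟨(i : ℕ), h⟩ else b

lemma mem_simplex_insertNth {a b : ℝ} {n : ℕ} (i : Fin (n + 1)) (y : Fin n → ℝ) (t : ℝ)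
    (hY : Monotone y ∧ ∀ j, y j ∈ Set.Icc a b) :
    (i.insertNth t y : Fin (n+1) → ℝ) ∈ orderedSimplex a b (n + 1) ↔
      t ∈ Set.Icc (lbnd a i y) (ubnd b i y) := by
  obtain ⟨hmono, hbdd⟩ := hY
  have key : ∀ (v : ℕ) (hv : v < n + 1), (i.insertNth t y : Fin (n+1) → ℝ) ⟨v, hv⟩ =
      if h : v < (i : ℕ) then y ⟨v, by have := i.isLt; omega⟩
      else if h2 : v = (i : ℕ) then t
      else y ⟨v - 1, by omega⟩ := fun v hv => insertNth_apply_val i t y v hv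
  constructor
  · rintro ⟨hm, hb⟩
    constructor
    · unfold lbnd
      split_ifs with h
      · have h1 := hm (a := ⟨(i : ℕ) - 1, by have := i.isLt; omega⟩)
          (b := ⟨(i : ℕ), i.isLt⟩) (Fin.mk_le_mk.mpr (by omega))
        rw [key _ _, key _ _] at h1
        rw [dif_pos (show (i:ℕ)-1 < (i:ℕ) by omega)] at h1
        rw [dif_neg (lt_irrefl (i:ℕ)), dif_pos rfl] at h1
        exact h1
      · have h1 := (hb ⟨(i:ℕ), i.isLt⟩).1
        rw [key _ _, dif_neg (lt_irrefl (i:ℕ)), dif_pos rfl] at h1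
        exact h1
    · unfold ubnd
      split_ifs with h
      · have h1 := hm (a := ⟨(i : ℕ), i.isLt⟩) (b := ⟨(i : ℕ) + 1, by omega⟩)
          (Fin.mk_le_mk.mpr (by omega))
        rw [key _ _, key _ _] at h1
        rw [dif_neg (lt_irrefl (i:ℕ)), dif_pos rfl,
          dif_neg (show ¬ (i:ℕ)+1 < (i:ℕ) by omega),
          dif_neg (show ¬ (i:ℕ)+1 = (i:ℕ) by omega)] at h1
        exact h1
      · have h1 := (hb ⟨(i:ℕ), i.isLt⟩).2
        rw [key _ _, dif_neg (lt_irrefl (i:ℕ)), dif_pos rfl] at h1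
        exact h1
  · rintro ⟨h1, h2⟩
    have hat : a ≤ t := by
      refine le_trans ?_ h1
      unfold lbnd; split_ifs with h
      · exact (hbdd _).1
      · rfl
    have htb : t ≤ b := by
      refine le_trans h2 ?_
      unfold ubnd; split_ifs with h
      · exact (hbdd _).2
      · rfl
    constructor
    · intro p q hpq
      rcases p with ⟨p, hp⟩; rcases q with ⟨q, hq⟩
      have hpq' : p ≤ q := hpq
      rw [key _ _, key _ _]
      split_ifs with c1 c2 c3 c4 c5 c6 c7 c8
      · exact hmono (Fin.mk_le_mk.mpr hpq')
      · refine le_trans ?_ h1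
        unfold lbnd
        rw [dif_pos (by omega)]
        exact hmono (Fin.mk_le_mk.mpr (by omega))
      · exact hmono (Fin.mk_le_mk.mpr (by omega))
      · omega
      · exact le_refl t
      · refine le_trans h2 ?_
        unfold ubnd
        rw [dif_pos (by omega)]
        exact hmono (Fin.mk_le_mk.mpr (by omega))
      · omega
      · omega
      · exact hmono (Fin.mk_le_mk.mpr (by omega))
    · intro k
      rcases k with ⟨v, hv⟩
      rw [key _ _]
      split_ifs with c1 c2
      · exact hbdd _
      · exact ⟨hat, htb⟩
      · exact hbdd _

lemma y_cond_of_mem {a b : ℝ} {n : ℕ} (i : Fin (n + 1)) (y : Fin n → ℝ) (t : ℝ)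
    (h : (i.insertNth t y : Fin (n+1) → ℝ) ∈ orderedSimplex a b (n + 1)) :
    Monotone y ∧ ∀ j, y j ∈ Set.Icc a b := by
  obtain ⟨hm, hb⟩ := h
  constructor
  · intro p q hpq
    have := hm ((Fin.strictMono_succAbove i).monotone hpq)
    rwa [Fin.insertNth_apply_succAbove, Fin.insertNth_apply_succAbove] at this
  · intro j
    have := hb (i.succAbove j)
    rwa [Fin.insertNth_apply_succAbove] at this

lemma measurableSet_orderedSimplex (a b : ℝ) (N : ℕ) :
    MeasurableSet (orderedSimplex a b N) := by
  have : orderedSimplex a b N =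
      (⋂ (p : Fin N) (q : Fin N) (_ : p ≤ q), {m : Fin N → ℝ | m p ≤ m q}) ∩
      ⋂ (i : Fin N), {m : Fin N → ℝ | m i ∈ Set.Icc a b} := by
    ext m
    simp only [orderedSimplex, Set.mem_setOf_eq, Set.mem_inter_iff, Set.mem_iInter]
    exact ⟨fun ⟨h1, h2⟩ => ⟨fun p q hpq => h1 hpq, h2⟩, fun ⟨h1, h2⟩ => ⟨fun p q hpq => h1 p q hpq, h2⟩⟩
  rw [this]
  exact (MeasurableSet.iInter fun p => MeasurableSet.iInter fun q => MeasurableSet.iInter fun _ =>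
      measurableSet_le (measurable_pi_apply p) (measurable_pi_apply q)).inter
    (MeasurableSet.iInter fun i => (measurable_pi_apply i) measurableSet_Icc)

lemma measurable_extSeq (a b : ℝ) (N : ℕ) (w : ℕ) :
    Measurable (fun m : Fin N → ℝ => extSeq a b N m w) := by
  unfold extSeq
  by_cases h : 1 ≤ w ∧ w ≤ N
  · simp only [dif_pos h]
    exact measurable_pi_apply _
  · simp only [dif_neg h]
    exact measurable_const

lemma measurable_integrand (ρA ρB : ℝ) (N : ℕ) (lam : ℕ → ℝ) (x : ℕ) :
    Measurable (fun m : Fin N → ℝ =>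
      (Real.log (geomMGF (extSeq ρA ρB N m (x - 1)) (lam x)) -
        2 * Real.log (geomMGF (extSeq ρA ρB N m x) (lam x)) +
        Real.log (geomMGF (extSeq ρA ρB N m (x + 1)) (lam x))) *
      ∏ y ∈ Finset.Icc 1 N, geomMGF (extSeq ρA ρB N m y) (lam y)) := by
  have hg : ∀ (w : ℕ) (l : ℝ), Measurable (fun m : Fin N → ℝ => geomMGF (extSeq ρA ρB N m w) l) :=
    fun w l => (measurable_const.add (measurable_const.mul (measurable_extSeq ρA ρB N w))).inv
  have hlog : ∀ (w : ℕ), Measurable (fun m : Fin N → ℝ =>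
      Real.log (geomMGF (extSeq ρA ρB N m w) (lam x))) :=
    fun w => Real.measurable_log.comp (hg w (lam x))
  exact (((hlog (x-1)).sub ((hlog x).const_mul 2)).add (hlog (x+1))).mul
    (Finset.measurable_prod _ fun w _ => hg w (lam w))

end Aux

lemma summand_zero (ρA ρB : ℝ) (hA : 0 < ρA) (hAB : ρA < ρB) (n : ℕ) (lam : ℕ → ℝ)
    (hlam : ∀ x ∈ Finset.Icc 1 (n + 1), lam x ∈ Set.Ico (0 : ℝ) 1)
    (x : ℕ) (hx1 : 1 ≤ x) (hx2 : x ≤ n + 1) :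
    ∫ m in orderedSimplex ρA ρB (n + 1),
        (Real.log (geomMGF (extSeq ρA ρB (n + 1) m (x - 1)) (lam x)) -
          2 * Real.log (geomMGF (extSeq ρA ρB (n + 1) m x) (lam x)) +
          Real.log (geomMGF (extSeq ρA ρB (n + 1) m (x + 1)) (lam x))) *
        ∏ y ∈ Finset.Icc 1 (n + 1), geomMGF (extSeq ρA ρB (n + 1) m y) (lam y) = 0 := by
  set N := n + 1 with hNdef
  set S := orderedSimplex ρA ρB N with hSdef
  set F : (Fin N → ℝ) → ℝ := fun m =>
    (Real.log (geomMGF (extSeq ρA ρB N m (x - 1)) (lam x)) -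
      2 * Real.log (geomMGF (extSeq ρA ρB N m x) (lam x)) +
      Real.log (geomMGF (extSeq ρA ρB N m (x + 1)) (lam x))) *
    ∏ y ∈ Finset.Icc 1 N, geomMGF (extSeq ρA ρB N m y) (lam y) with hFdef
  have hS : MeasurableSet S := measurableSet_orderedSimplex ρA ρB N
  have hFmeas : Measurable F := measurable_integrand ρA ρB N lam x
  -- bounds for the integrand on S
  have hext : ∀ m ∈ S, ∀ w : ℕ, extSeq ρA ρB N m w ∈ Set.Icc ρA ρB := by
    intro m hm w
    unfold extSeq
    split_ifs with h h0
    · exact hm.2 _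
    · exact ⟨le_refl _, hAB.le⟩
    · exact ⟨hAB.le, le_refl _⟩
  have hgeom : ∀ u ∈ Set.Icc ρA ρB, ∀ l ∈ Set.Ico (0:ℝ) 1,
      geomMGF u l ∈ Set.Ioc (0:ℝ) 1 ∧ |Real.log (geomMGF u l)| ≤ ρB := by
    intro u hu l hl
    have h1 : (1:ℝ) ≤ 1 + (1 - l) * u := by nlinarith [hu.1, hl.1, hl.2]
    have h0 : (0:ℝ) < 1 + (1 - l) * u := by linarith
    have hmem : geomMGF u l ∈ Set.Ioc (0:ℝ) 1 := by
      constructor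
      · exact inv_pos.mpr h0
      · rw [geomMGF]
        exact inv_le_one_of_one_le₀ h1
    refine ⟨hmem, ?_⟩
    rw [geomMGF, Real.log_inv, abs_neg, abs_of_nonneg (Real.log_nonneg h1)]
    have := Real.log_le_sub_one_of_pos h0
    nlinarith [hu.1, hu.2, hl.1, hl.2]
  have hbound : ∀ m ∈ S, ‖F m‖ ≤ 4 * ρB := by
    intro m hm
    have hB : 0 < ρB := hA.trans hAB
    have hprod01 : ∀ w ∈ Finset.Icc 1 N, geomMGF (extSeq ρA ρB N m w) (lam w) ∈ Set.Ioc (0:ℝ) 1 :=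
      fun w hw => (hgeom _ (hext m hm w) _ (hlam w hw)).1
    have hp1 : |∏ w ∈ Finset.Icc 1 N, geomMGF (extSeq ρA ρB N m w) (lam w)| ≤ 1 := by
      rw [abs_of_nonneg (Finset.prod_nonneg fun w hw => (hprod01 w hw).1.le)]
      exact Finset.prod_le_one (fun w hw => (hprod01 w hw).1.le) (fun w hw => (hprod01 w hw).2)
    have hlx : lam x ∈ Set.Ico (0:ℝ) 1 := hlam x (by simp [hNdef]; omega)
    have l1 : |Real.log (geomMGF (extSeq ρA ρB N m (x-1)) (lam x))| ≤ ρB :=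
      (hgeom _ (hext m hm _) _ hlx).2
    have l2 : |Real.log (geomMGF (extSeq ρA ρB N m x) (lam x))| ≤ ρB :=
      (hgeom _ (hext m hm _) _ hlx).2
    have l3 : |Real.log (geomMGF (extSeq ρA ρB N m (x+1)) (lam x))| ≤ ρB :=
      (hgeom _ (hext m hm _) _ hlx).2
    rw [hFdef]
    simp only [Real.norm_eq_abs, abs_mul]
    calc |Real.log (geomMGF (extSeq ρA ρB N m (x - 1)) (lam x)) -
          2 * Real.log (geomMGF (extSeq ρA ρB N m x) (lam x)) +
          Real.log (geomMGF (extSeq ρA ρB N m (x + 1)) (lam x))| *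
          |∏ y ∈ Finset.Icc 1 N, geomMGF (extSeq ρA ρB N m y) (lam y)|
        ≤ (4 * ρB) * 1 := by
          apply mul_le_mul _ hp1 (abs_nonneg _) (by positivity)
          calc |Real.log (geomMGF (extSeq ρA ρB N m (x - 1)) (lam x)) -
              2 * Real.log (geomMGF (extSeq ρA ρB N m x) (lam x)) +
              Real.log (geomMGF (extSeq ρA ρB N m (x + 1)) (lam x))|
              ≤ |Real.log (geomMGF (extSeq ρA ρB N m (x - 1)) (lam x)) -
                2 * Real.log (geomMGF (extSeq ρA ρB N m x) (lam x))| +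
                |Real.log (geomMGF (extSeq ρA ρB N m (x + 1)) (lam x))| := abs_add_le _ _
            _ ≤ (|Real.log (geomMGF (extSeq ρA ρB N m (x - 1)) (lam x))| +
                |2 * Real.log (geomMGF (extSeq ρA ρB N m x) (lam x))|) +
                |Real.log (geomMGF (extSeq ρA ρB N m (x + 1)) (lam x))| := by
                  exact add_le_add (abs_sub _ _) le_rfl
            _ ≤ 4 * ρB := by
                  rw [abs_mul]
                  simp only [abs_two]
                  linarith
      _ = 4 * ρB := mul_one _
  -- integrability
  have hint : Integrable (S.indicator F) := by
    rw [integrable_indicator_iff hS]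
    apply Measure.integrableOn_of_bounded (M := 4 * ρB)
    · have hsub : S ⊆ Set.pi Set.univ (fun _ : Fin N => Set.Icc ρA ρB) := by
        intro m hm
        rw [Set.mem_univ_pi]
        exact fun k => hm.2 k
      exact ((measure_mono hsub).trans_lt
        ((isCompact_univ_pi fun _ => isCompact_Icc).measure_lt_top)).ne
    · exact hFmeas.aestronglyMeasurable
    · exact ae_restrict_of_forall_mem hS fun m hm => hbound m hm
  -- pass to the product space
  have hx2' : x - 1 < N := by omega
  set i : Fin N := ⟨x - 1, hx2'⟩ with hidef
  set e := MeasurableEquiv.piFinSuccAbove (fun _ : Fin (n + 1) => ℝ) i with hedef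
  have mp : MeasurePreserving e volume volume :=
    volume_preserving_piFinSuccAbove (fun _ : Fin (n + 1) => ℝ) i
  have mps : MeasurePreserving e.symm volume volume := MeasurePreserving.symm e mp
  have esymm : ∀ (t : ℝ) (y : Fin n → ℝ),
      e.symm (t, y) = (i.insertNth t y : Fin N → ℝ) := by
    intro t y
    rfl
  have step1 : (∫ m in S, F m) = ∫ m, S.indicator F m := (integral_indicator hS).symm
  have step2 : (∫ m, S.indicator F m) = ∫ z : ℝ × (Fin n → ℝ), S.indicator F (e.symm z) :=
    (mps.integral_comp e.symm.measurableEmbedding _).symm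
  have hint2 : Integrable (fun z : ℝ × (Fin n → ℝ) => S.indicator F (e.symm z))
      ((volume : Measure ℝ).prod (volume : Measure (Fin n → ℝ))) := by
    rw [← Measure.volume_eq_prod]
    exact ((mps.integrable_comp_emb e.symm.measurableEmbedding).mpr hint)
  have step3 : (∫ z : ℝ × (Fin n → ℝ), S.indicator F (e.symm z)) =
      ∫ y : Fin n → ℝ, ∫ t : ℝ, S.indicator F (e.symm (t, y)) := by
    rw [Measure.volume_eq_prod]
    exact integral_prod_symm _ hint2
  -- the inner integral vanishes for every y
  have hlx : lam x ∈ Set.Ico (0:ℝ) 1 := hlam x (by simp [hNdef]; omega)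
  set s : ℝ := 1 - lam x with hsdef
  have hs : 0 < s := by simp only [hsdef]; linarith [hlx.2]
  have hinner : ∀ y : Fin n → ℝ, (∫ t : ℝ, S.indicator F (e.symm (t, y))) = 0 := by
    intro y
    by_cases hY : Monotone y ∧ ∀ j, y j ∈ Set.Icc ρA ρB
    · set lb := lbnd ρA i y with hlbdef
      set ub := ubnd ρB i y with hubdef
      have hAlb : ρA ≤ lb := by
        rw [hlbdef]; unfold lbnd; split_ifs with h
        · exact (hY.2 _).1
        · exact le_refl _
      have hlu : lb ≤ ub := by
        rw [hlbdef, hubdef]; unfold lbnd ubnd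
        split_ifs with h h2 h3
        · exact hY.1 (Fin.mk_le_mk.mpr (by omega))
        · exact (hY.2 _).2
        · exact (hY.2 _).1
        · exact hAB.le
      set C : ℝ := ∏ w ∈ (Finset.Icc 1 N).erase x,
        geomMGF (extSeq ρA ρB N (i.insertNth 0 y) w) (lam w) with hCdef
      -- pointwise identities
      have e_x : ∀ t : ℝ, extSeq ρA ρB N (i.insertNth t y) x = t := by
        intro t
        unfold extSeq
        rw [dif_pos ⟨hx1, hx2⟩, insertNth_apply_val, dif_neg (lt_irrefl _), dif_pos rfl]
      have e_xm : ∀ t : ℝ, extSeq ρA ρB N (i.insertNth t y) (x - 1) = lb := by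
        intro t
        rw [hlbdef]
        unfold extSeq lbnd
        by_cases hx1' : x = 1
        · subst hx1'
          rw [dif_neg (by omega), if_pos rfl, dif_neg (by simp [hidef])]
        · rw [dif_pos ⟨by omega, by omega⟩, insertNth_apply_val,
            dif_pos (show x - 1 - 1 < (i : ℕ) by simp [hidef] <;> omega),
            dif_pos (show 0 < (i : ℕ) by simp [hidef] <;> omega)]
      have e_xp : ∀ t : ℝ, extSeq ρA ρB N (i.insertNth t y) (x + 1) = ub := by
        intro t
        rw [hubdef]
        unfold extSeq ubnd
        by_cases hxn : x = n + 1
        · rw [dif_neg (by omega), if_neg (by omega), dif_neg (by simp [hidef] <;> omega)]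
        · rw [dif_pos ⟨by omega, by omega⟩, insertNth_apply_val,
            dif_neg (show ¬ (x + 1 - 1 < (i : ℕ)) by simp [hidef] <;> omega),
            dif_neg (show ¬ (x + 1 - 1 = (i : ℕ)) by simp [hidef] <;> omega),
            dif_pos (show (i : ℕ) < n by simp [hidef] <;> omega)]
          exact congrArg y (Fin.ext (by simp [hidef] <;> omega))
      have e_ne : ∀ (t : ℝ), ∀ w ∈ (Finset.Icc 1 N).erase x,
          extSeq ρA ρB N (i.insertNth t y) w = extSeq ρA ρB N (i.insertNth 0 y) w := by
        intro t w hw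
        simp only [Finset.mem_erase, Finset.mem_Icc] at hw
        obtain ⟨hwx, hw1, hw2⟩ := hw
        unfold extSeq
        rw [dif_pos ⟨hw1, hw2⟩, dif_pos ⟨hw1, hw2⟩, insertNth_apply_val, insertNth_apply_val]
        split_ifs with h h2
        · rfl
        · exact absurd h2 (by simp [hidef] <;> omega)
        · rfl
      have hprod : ∀ t : ℝ, (∏ w ∈ Finset.Icc 1 N,
          geomMGF (extSeq ρA ρB N (i.insertNth t y) w) (lam w)) = (1 + s * t)⁻¹ * C := by
        intro t
        rw [← Finset.mul_prod_erase _ _ (show x ∈ Finset.Icc 1 N by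
          simp only [Finset.mem_Icc]; omega)]
        congr 1
        · rw [e_x t]; rfl
        · exact Finset.prod_congr rfl fun w hw => by rw [e_ne t w hw]
      have hcombo : ∀ t : ℝ,
          Real.log (geomMGF (extSeq ρA ρB N (i.insertNth t y) (x - 1)) (lam x)) -
            2 * Real.log (geomMGF (extSeq ρA ρB N (i.insertNth t y) x) (lam x)) +
            Real.log (geomMGF (extSeq ρA ρB N (i.insertNth t y) (x + 1)) (lam x)) =
          2 * Real.log (1 + s * t) - Real.log (1 + s * lb) - Real.log (1 + s * ub) := by
        intro t
        rw [e_xm t, e_x t, e_xp t]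
        unfold geomMGF
        rw [Real.log_inv, Real.log_inv, Real.log_inv]
        ring
      have hGt : ∀ t : ℝ, S.indicator F (e.symm (t, y)) =
          Set.indicator (Set.Icc lb ub)
            (fun t => (2 * Real.log (1 + s * t) - Real.log (1 + s * lb) -
              Real.log (1 + s * ub)) * ((1 + s * t)⁻¹ * C)) t := by
        intro t
        rw [esymm t y]
        by_cases hmem : t ∈ Set.Icc lb ub
        · rw [Set.indicator_of_mem ((mem_simplex_insertNth i y t hY).mpr hmem),
            Set.indicator_of_mem hmem]
          rw [hFdef]
          simp only
          rw [hcombo t, hprod t]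
        · rw [Set.indicator_of_notMem (fun hc => hmem ((mem_simplex_insertNth i y t hY).mp hc)),
            Set.indicator_of_notMem hmem]
      have hlbpos : 0 < 1 + s * lb := by nlinarith
      calc (∫ t : ℝ, S.indicator F (e.symm (t, y)))
          = ∫ t : ℝ, Set.indicator (Set.Icc lb ub)
            (fun t => (2 * Real.log (1 + s * t) - Real.log (1 + s * lb) -
              Real.log (1 + s * ub)) * ((1 + s * t)⁻¹ * C)) t := by
            exact integral_congr_ae (Filter.Eventually.of_forall hGt)
        _ = ∫ t in Set.Icc lb ub, (2 * Real.log (1 + s * t) - Real.log (1 + s * lb) -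
              Real.log (1 + s * ub)) * ((1 + s * t)⁻¹ * C) :=
            integral_indicator measurableSet_Icc
        _ = ∫ t in Set.Ioc lb ub, (2 * Real.log (1 + s * t) - Real.log (1 + s * lb) -
              Real.log (1 + s * ub)) * ((1 + s * t)⁻¹ * C) :=
            integral_Icc_eq_integral_Ioc
        _ = ∫ t in lb..ub, (2 * Real.log (1 + s * t) - Real.log (1 + s * lb) -
              Real.log (1 + s * ub)) * ((1 + s * t)⁻¹ * C) :=
            (intervalIntegral.integral_of_le hlu).symm
        _ = ∫ t in lb..ub, C * ((2 * Real.log (1 + s * t) - Real.log (1 + s * lb) -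
              Real.log (1 + s * ub)) * (1 + s * t)⁻¹) := by
            apply intervalIntegral.integral_congr
            intro t _
            ring
        _ = C * ∫ t in lb..ub, (2 * Real.log (1 + s * t) - Real.log (1 + s * lb) -
              Real.log (1 + s * ub)) * (1 + s * t)⁻¹ :=
            intervalIntegral.integral_const_mul _ _
        _ = 0 := by rw [key_integral s lb ub hs hlbpos hlu, mul_zero]
    · have hzero : ∀ t : ℝ, S.indicator F (e.symm (t, y)) = 0 := by
        intro t
        rw [esymm t y]
        exact Set.indicator_of_notMem (fun hc => hY (y_cond_of_mem i y t hc)) _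
      simp only [hzero, integral_zero]
  rw [step1, step2, step3]
  simp only [hinner, integral_zero]

theorem stationarity_sum_zero (ρA ρB : ℝ) (hA : 0 < ρA) (hAB : ρA < ρB)
    (N : ℕ) (hN : 1 ≤ N) (lam : ℕ → ℝ)
    (hlam : ∀ x ∈ Finset.Icc 1 N, lam x ∈ Set.Ico (0 : ℝ) 1) :
    (∑ x ∈ Finset.Icc 1 N,
      ∫ m in orderedSimplex ρA ρB N,
        (Real.log (geomMGF (extSeq ρA ρB N m (x - 1)) (lam x)) -
          2 * Real.log (geomMGF (extSeq ρA ρB N m x) (lam x)) +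
          Real.log (geomMGF (extSeq ρA ρB N m (x + 1)) (lam x))) *
        ∏ y ∈ Finset.Icc 1 N, geomMGF (extSeq ρA ρB N m y) (lam y)) = 0 ∧
    ∀ x ∈ Finset.Icc 1 N,
      ∫ m in orderedSimplex ρA ρB N,
        (Real.log (geomMGF (extSeq ρA ρB N m (x - 1)) (lam x)) -
          2 * Real.log (geomMGF (extSeq ρA ρB N m x) (lam x)) +
          Real.log (geomMGF (extSeq ρA ρB N m (x + 1)) (lam x))) *
        ∏ y ∈ Finset.Icc 1 N, geomMGF (extSeq ρA ρB N m y) (lam y) = 0 := by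
  obtain ⟨n, rfl⟩ : ∃ n, N = n + 1 := ⟨N - 1, by omega⟩
  have key : ∀ x ∈ Finset.Icc 1 (n + 1),
      (∫ m in orderedSimplex ρA ρB (n + 1),
        (Real.log (geomMGF (extSeq ρA ρB (n + 1) m (x - 1)) (lam x)) -
          2 * Real.log (geomMGF (extSeq ρA ρB (n + 1) m x) (lam x)) +
          Real.log (geomMGF (extSeq ρA ρB (n + 1) m (x + 1)) (lam x))) *
        ∏ y ∈ Finset.Icc 1 (n + 1), geomMGF (extSeq ρA ρB (n + 1) m y) (lam y)) = 0 := by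
    intro x hx
    rw [Finset.mem_Icc] at hx
    exact summand_zero ρA ρB hA hAB n lam hlam x hx.1 hx.2
  exact ⟨Finset.sum_eq_zero key, key⟩
end

section
/- Let 0 < T_A < T_B and t < 0, with F_m(t) = (1 - tm)^{-1}. Then ∫_{T_A}^{T_B} [log F_{T_A}(t) - 2·log F_m(t) + log F_{T_B}(t)] · F_m(t) dm = 0. -/
noncomputable def expMGF (m t : ℝ) : ℝ := (1 - t * m)⁻¹

theorem single_site_stationarity_exp (TA TB : ℝ) (hA : 0 < TA) (hAB : TA < TB)
    (t : ℝ) (ht : t < 0) :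
    ∫ m in TA..TB,
      (Real.log (expMGF TA t) - 2 * Real.log (expMGF m t) + Real.log (expMGF TB t)) *
        expMGF m t = 0 := by
  have ht0 : t ≠ 0 := ne_of_lt ht
  have hpos : ∀ m ∈ Set.uIcc TA TB, 0 < 1 - t * m := by
    intro m hm
    rw [Set.uIcc_of_le hAB.le] at hm
    nlinarith [hm.1]
  set G : ℝ → ℝ := fun m => Real.log (expMGF m t) with hGdef
  set H : ℝ → ℝ := fun m => ((G TA + G TB) * G m - (G m) ^ 2) / t with hHdef
  have hderivG : ∀ m ∈ Set.uIcc TA TB, HasDerivAt G (t * (1 - t * m)⁻¹) m := by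
    intro m hm
    have h1 : HasDerivAt (fun x : ℝ => 1 - t * x) (-t) m := by
      have h := ((hasDerivAt_id' m).const_mul t).const_sub (1 : ℝ)
      rw [mul_one] at h
      exact h
    have h2 : HasDerivAt (fun x : ℝ => -Real.log (1 - t * x)) (-(-t / (1 - t * m))) m :=
      (h1.log (hpos m hm).ne').neg
    have heq : G = fun x : ℝ => -Real.log (1 - t * x) := by
      funext x; simp [hGdef, expMGF, Real.log_inv]
    rw [heq]
    convert h2 using 1
    field_simp
  have hderivH : ∀ m ∈ Set.uIcc TA TB,
      HasDerivAt H ((G TA - 2 * G m + G TB) * expMGF m t) m := by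
    intro m hm
    have hg := hderivG m hm
    have h3 : HasDerivAt H
        (((G TA + G TB) * (t * (1 - t * m)⁻¹)
          - (2 : ℕ) * G m ^ (2 - 1) * (t * (1 - t * m)⁻¹)) / t) m :=
      ((hg.const_mul (G TA + G TB)).sub (hg.pow 2)).div_const t
    convert h3 using 1
    have hne := (hpos m hm).ne'
    simp only [expMGF]
    field_simp
    ring
  have hint : IntervalIntegrable
      (fun m => (G TA - 2 * G m + G TB) * expMGF m t) MeasureTheory.volume TA TB := by
    apply ContinuousOn.intervalIntegrable
    apply ContinuousOn.mul
    · apply ContinuousOn.add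
      · apply ContinuousOn.sub continuousOn_const
        apply ContinuousOn.mul continuousOn_const
        intro m hm
        have : G = fun x : ℝ => -Real.log (1 - t * x) := by
          funext x; simp [hGdef, expMGF, Real.log_inv]
        rw [this]
        exact ((Real.continuousOn_log.comp
          ((continuousOn_const.sub (continuousOn_const.mul continuousOn_id)))
          (fun x hx => (hpos x hx).ne')).neg) m hm
      · exact continuousOn_const
    · intro m hm
      exact ((continuousOn_const.sub
        (continuousOn_const.mul continuousOn_id)).inv₀
        (fun x hx => (hpos x hx).ne')) m hm
  have hcalc := intervalIntegral.integral_eq_sub_of_hasDerivAt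
    (fun m hm => hderivH m hm) hint
  have : ∫ m in TA..TB, (G TA - 2 * G m + G TB) * expMGF m t = H TB - H TA := hcalc
  rw [show (∫ m in TA..TB,
      (Real.log (expMGF TA t) - 2 * Real.log (expMGF m t) + Real.log (expMGF TB t)) *
        expMGF m t) = ∫ m in TA..TB, (G TA - 2 * G m + G TB) * expMGF m t from rfl, this]
  simp only [hHdef]
  field_simp
  ring
end

section
/- Let 0 < T_A < T_B, N ≥ 1, t_1,...,t_N < 0, F_m(t) = (1-tm)^{-1}, with conventions m_0 = T_A, m_{N+1} = T_B, and O_N = {T_A ≤ m_1 ≤ ... ≤ m_N ≤ T_B}. Then for each x ∈ {1,...,N}, ∫_{O_N} [log F_{m_{x-1}}(t_x) - 2·log F_{m_x}(t_x) + log F_{m_{x+1}}(t_x)] · Π_{y=1}^N F_{m_y}(t_y) dm = 0. -/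
open MeasureTheory

lemma mem_orderedSimplex_iff_chain (a b : ℝ) (N : ℕ) (hN : 1 ≤ N) (m : Fin N → ℝ) :
    m ∈ orderedSimplex a b N ↔ ∀ k, extSeq a b N m k ≤ extSeq a b N m (k + 1) := by
  constructor
  · rintro ⟨hmono, hbd⟩ k
    unfold extSeq
    split_ifs <;> try omega
    all_goals first
      | exact hmono (Fin.mk_le_mk.mpr (by omega))
      | exact (hbd _).1
      | exact (hbd _).2
      | exact le_refl _
      | simp_all
  · intro h
    have hmono : Monotone (extSeq a b N m) := monotone_nat_of_le_succ h
    have hval : ∀ i : Fin N, extSeq a b N m (i.1 + 1) = m i := by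
      intro i
      unfold extSeq
      rw [dif_pos ⟨by omega, by omega⟩]
      exact congrArg m (Fin.ext (by simp))
    constructor
    · intro p q hpq
      have := hmono (show p.1 + 1 ≤ q.1 + 1 by
        have : p.1 ≤ q.1 := hpq
        omega)
      rwa [hval, hval] at this
    · intro j
      have h0 : extSeq a b N m 0 = a := by
        unfold extSeq; rw [dif_neg (by omega), if_pos rfl]
      have hN : extSeq a b N m (N + 1) = b := by
        unfold extSeq; rw [dif_neg (by omega), if_neg (by omega)]
      constructor
      · have := hmono (show 0 ≤ j.1 + 1 by omega)
        rwa [hval, h0] at this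
      · have := hmono (show j.1 + 1 ≤ N + 1 by omega)
        rwa [hval, hN] at this

lemma extSeq_insertNth (a b : ℝ) (n x : ℕ) (hx1 : 1 ≤ x) (hx2 : x ≤ n + 1)
    (u : ℝ) (v : Fin n → ℝ) (k : ℕ) :
    extSeq a b (n + 1) ((⟨x - 1, by omega⟩ : Fin (n + 1)).insertNth u v) k =
      if k = x then u else
        if k < x then extSeq a b n v k else extSeq a b n v (k - 1) := by
  set i : Fin (n + 1) := ⟨x - 1, by omega⟩ with hi
  rcases eq_or_ne k x with rfl | hkx
  · rw [if_pos rfl]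
    unfold extSeq
    rw [dif_pos ⟨hx1, hx2⟩]
    have hik : (⟨k - 1, by omega⟩ : Fin (n + 1)) = i := rfl
    rw [hik, Fin.insertNth_apply_same]
  · rw [if_neg hkx]
    by_cases hk1 : 1 ≤ k ∧ k ≤ n + 1
    · have lhs : extSeq a b (n + 1) (i.insertNth u v) k
          = i.insertNth (α := fun _ => ℝ) u v ⟨k - 1, by omega⟩ := by
        unfold extSeq; rw [dif_pos hk1]
      rcases lt_or_gt_of_ne hkx with hlt | hgt
      · have hkn : k ≤ n := by omega
        have hc : (⟨k - 1, by omega⟩ : Fin (n + 1)) = i.succAbove ⟨k - 1, by omega⟩ := by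
          rw [Fin.succAbove_of_castSucc_lt _ _ (by simp [Fin.lt_def, hi]; omega)]
          rfl
        rw [lhs, hc, Fin.insertNth_apply_succAbove, if_pos hlt]
        unfold extSeq
        rw [dif_pos ⟨by omega, by omega⟩]
      · have hc : (⟨k - 1, by omega⟩ : Fin (n + 1)) = i.succAbove ⟨k - 2, by omega⟩ := by
          rw [Fin.succAbove_of_le_castSucc _ _ (by simp [Fin.le_def, hi]; omega)]
          exact Fin.ext (by simp; omega)
        rw [lhs, hc, Fin.insertNth_apply_succAbove, if_neg (by omega)]
        unfold extSeq
        rw [dif_pos ⟨by omega, by omega⟩]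
        exact congrArg v (Fin.ext (show k - 2 = k - 1 - 1 by omega))
    · rcases Nat.eq_zero_or_pos k with rfl | hk0
      · simp [extSeq, show 0 < x by omega]
      · simp only [extSeq]
        rw [dif_neg hk1, if_neg (show ¬ k = 0 by omega), if_neg (show ¬ k < x by omega),
          dif_neg (show ¬ (1 ≤ k - 1 ∧ k - 1 ≤ n) by omega),
          if_neg (show ¬ k - 1 = 0 by omega)]

lemma insertNth_mem_simplex_iff (a b : ℝ) (n x : ℕ) (hx1 : 1 ≤ x) (hx2 : x ≤ n + 1)
    (u : ℝ) (v : Fin n → ℝ) :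
    (⟨x - 1, by omega⟩ : Fin (n + 1)).insertNth u v ∈ orderedSimplex a b (n + 1) ↔
      ((∀ j, j ≠ x - 1 → extSeq a b n v j ≤ extSeq a b n v (j + 1)) ∧
        extSeq a b n v (x - 1) ≤ u ∧ u ≤ extSeq a b n v x) := by
  have Wx : extSeq a b (n + 1) ((⟨x - 1, by omega⟩ : Fin (n + 1)).insertNth u v) x = u := by
    rw [extSeq_insertNth a b n x hx1 hx2, if_pos rfl]
  have Wlt : ∀ k, k < x →
      extSeq a b (n + 1) ((⟨x - 1, by omega⟩ : Fin (n + 1)).insertNth u v) k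
        = extSeq a b n v k := by
    intro k hk
    rw [extSeq_insertNth a b n x hx1 hx2, if_neg (by omega), if_pos hk]
  have Wgt : ∀ k, x < k →
      extSeq a b (n + 1) ((⟨x - 1, by omega⟩ : Fin (n + 1)).insertNth u v) k
        = extSeq a b n v (k - 1) := by
    intro k hk
    rw [extSeq_insertNth a b n x hx1 hx2, if_neg (by omega), if_neg (by omega)]
  rw [mem_orderedSimplex_iff_chain a b (n + 1) (by omega)]
  constructor
  · intro h
    refine ⟨fun j hj => ?_, ?_, ?_⟩
    · rcases lt_or_ge j (x - 1) with hlt | hge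
      · have := h j
        rwa [Wlt j (by omega), Wlt (j + 1) (by omega)] at this
      · have hjx : x ≤ j := by omega
        have := h (j + 1)
        rw [Wgt (j + 1) (by omega), Wgt (j + 2) (by omega)] at this
        simpa using this
    · have := h (x - 1)
      rwa [Wlt (x - 1) (by omega), show x - 1 + 1 = x by omega, Wx] at this
    · have := h x
      rwa [Wx, Wgt (x + 1) (by omega), show x + 1 - 1 = x by omega] at this
  · rintro ⟨hC, hAu, huB⟩ k
    rcases lt_trichotomy k (x - 1) with hk | hk | hk
    · rw [Wlt k (by omega), Wlt (k + 1) (by omega)]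
      exact hC k (by omega)
    · subst hk
      rw [Wlt (x - 1) (by omega), show x - 1 + 1 = x by omega, Wx]
      exact hAu
    · rcases eq_or_lt_of_le (show x ≤ k by omega) with heq | hk2
      · rw [← heq, Wx, Wgt (x + 1) (by omega), show x + 1 - 1 = x by omega]
        exact huB
      · rw [Wgt k (by omega), Wgt (k + 1) (by omega), show k + 1 - 1 = k by omega]
        have := hC (k - 1) (by omega)
        rwa [show k - 1 + 1 = k by omega] at this

lemma core_integral_zero (tx : ℝ) (htx : tx < 0) (A B P : ℝ) (hA : 0 < A) (hAB : A ≤ B) :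
    ∫ u in A..B,
      (Real.log (expMGF A tx) - 2 * Real.log (expMGF u tx) + Real.log (expMGF B tx)) *
        (expMGF u tx * P) = 0 := by
  have htx0 : tx ≠ 0 := ne_of_lt htx
  set L : ℝ → ℝ := fun u => Real.log (1 - tx * u) with hL
  have hpos : ∀ u ∈ Set.uIcc A B, 0 < 1 - tx * u := by
    intro u hu
    rw [Set.uIcc_of_le hAB] at hu
    nlinarith [hu.1]
  have hlog : ∀ u : ℝ, Real.log (expMGF u tx) = -L u := by
    intro u; simp [expMGF, hL, Real.log_inv]
  set c : ℝ := -(L A + L B) with hc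
  have hrw : ∀ u : ℝ,
      (Real.log (expMGF A tx) - 2 * Real.log (expMGF u tx) + Real.log (expMGF B tx)) *
        (expMGF u tx * P) = (c + 2 * L u) * ((1 - tx * u)⁻¹ * P) := by
    intro u
    rw [hlog, hlog, hlog]
    simp only [expMGF, hc]
    ring
  simp_rw [hrw]
  have hLd : ∀ u ∈ Set.uIcc A B, HasDerivAt L ((1 - tx * u)⁻¹ * -tx) u := by
    intro u hu
    have h1 : HasDerivAt (fun w : ℝ => 1 - tx * w) (-tx) u := by
      simpa using ((hasDerivAt_id u).const_mul tx).const_sub 1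
    have := (Real.hasDerivAt_log (ne_of_gt (hpos u hu))).comp u h1
    simpa [hL, mul_comm, Function.comp_def] using this
  have hderiv : ∀ u ∈ Set.uIcc A B,
      HasDerivAt (fun w => (-P / tx) * (c * L w + L w ^ 2))
        ((c + 2 * L u) * ((1 - tx * u)⁻¹ * P)) u := by
    intro u hu
    have h2 := hLd u hu
    have h3 := ((h2.const_mul c).add (h2.pow 2))
    have h4 := h3.const_mul (-P / tx)
    have hne : (1 : ℝ) - tx * u ≠ 0 := ne_of_gt (hpos u hu)
    refine h4.congr_deriv ?_
    field_simp
    ring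
  have hcontL : ContinuousOn L (Set.uIcc A B) := by
    apply ContinuousOn.log
    · exact (continuous_const.sub (continuous_const.mul continuous_id)).continuousOn
    · exact fun u hu => ne_of_gt (hpos u hu)
  have hint : IntervalIntegrable (fun u => (c + 2 * L u) * ((1 - tx * u)⁻¹ * P)) volume A B := by
    apply ContinuousOn.intervalIntegrable
    apply ContinuousOn.mul
    · exact continuousOn_const.add (continuousOn_const.mul hcontL)
    · apply ContinuousOn.mul _ continuousOn_const
      exact ((continuous_const.sub (continuous_const.mul continuous_id)).continuousOn).inv₀
        fun u hu => ne_of_gt (hpos u hu)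
  rw [intervalIntegral.integral_eq_sub_of_hasDerivAt hderiv hint]
  simp only [hc]
  ring

theorem stationarity_summand_zero_exp (TA TB : ℝ) (hA : 0 < TA) (hAB : TA < TB)
    (N : ℕ) (hN : 1 ≤ N) (t : ℕ → ℝ) (ht : ∀ x ∈ Finset.Icc 1 N, t x < 0)
    (x : ℕ) (hx : x ∈ Finset.Icc 1 N) :
    ∫ m in orderedSimplex TA TB N,
      (Real.log (expMGF (extSeq TA TB N m (x - 1)) (t x)) -
        2 * Real.log (expMGF (extSeq TA TB N m x) (t x)) +
        Real.log (expMGF (extSeq TA TB N m (x + 1)) (t x))) *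
      ∏ y ∈ Finset.Icc 1 N, expMGF (extSeq TA TB N m y) (t y) = 0 := by
  rw [Finset.mem_Icc] at hx
  obtain ⟨hx1, hxN⟩ := hx
  obtain ⟨n, rfl⟩ : ∃ n, N = n + 1 := ⟨N - 1, by omega⟩
  have htx : t x < 0 := ht x (Finset.mem_Icc.mpr ⟨hx1, hxN⟩)
  set f : (Fin (n + 1) → ℝ) → ℝ := fun m =>
    (Real.log (expMGF (extSeq TA TB (n + 1) m (x - 1)) (t x)) -
        2 * Real.log (expMGF (extSeq TA TB (n + 1) m x) (t x)) +
        Real.log (expMGF (extSeq TA TB (n + 1) m (x + 1)) (t x))) *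
      ∏ y ∈ Finset.Icc 1 (n + 1), expMGF (extSeq TA TB (n + 1) m y) (t y) with hfdef
  have hSclosed : IsClosed (orderedSimplex TA TB (n + 1)) := by
    have he : orderedSimplex TA TB (n + 1) =
        (⋂ (p : Fin (n + 1)) (q : Fin (n + 1)) (_ : p ≤ q), {m : Fin (n + 1) → ℝ | m p ≤ m q}) ∩
          ⋂ j : Fin (n + 1), (fun m : Fin (n + 1) → ℝ => m j) ⁻¹' Set.Icc TA TB := by
      ext m
      simp only [orderedSimplex, Set.mem_setOf_eq, Set.mem_inter_iff, Set.mem_iInter,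
        Set.mem_preimage]
      exact ⟨fun h => ⟨fun p q hpq => h.1 hpq, h.2⟩, fun h => ⟨fun p q hpq => h.1 p q hpq, h.2⟩⟩
    rw [he]
    refine IsClosed.inter ?_ (isClosed_iInter fun j => (isClosed_Icc).preimage (continuous_apply j))
    exact isClosed_iInter fun p => isClosed_iInter fun q => isClosed_iInter fun _ =>
      isClosed_le (continuous_apply p) (continuous_apply q)
  have hSmeas : MeasurableSet (orderedSimplex TA TB (n + 1)) := hSclosed.measurableSet
  have hScompact : IsCompact (orderedSimplex TA TB (n + 1)) := by
    apply IsCompact.of_isClosed_subset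
      (isCompact_univ_pi fun _ : Fin (n + 1) => isCompact_Icc (a := TA) (b := TB)) hSclosed
    intro m hm
    exact fun j _ => hm.2 j
  have hval : ∀ m ∈ orderedSimplex TA TB (n + 1), ∀ k,
      extSeq TA TB (n + 1) m k ∈ Set.Icc TA TB := by
    intro m hm k
    unfold extSeq
    split_ifs
    · exact hm.2 _
    · exact ⟨le_refl _, le_of_lt hAB⟩
    · exact ⟨le_of_lt hAB, le_refl _⟩
  have hden : ∀ (k : ℕ) (y : ℝ), y < 0 → ∀ m ∈ orderedSimplex TA TB (n + 1),
      (1 : ℝ) - y * extSeq TA TB (n + 1) m k ≠ 0 := by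
    intro k y hy m hm
    have h1 := (hval m hm k).1
    nlinarith
  have hcontExt : ∀ k, Continuous fun m : Fin (n + 1) → ℝ => extSeq TA TB (n + 1) m k := by
    intro k
    by_cases h : 1 ≤ k ∧ k ≤ n + 1
    · simpa [extSeq, h] using continuous_apply (⟨k - 1, by omega⟩ : Fin (n + 1))
    · simp only [extSeq, dif_neg h]
      exact continuous_const
  have hmgfCont : ∀ (k : ℕ) (y : ℝ), y < 0 →
      ContinuousOn (fun m => expMGF (extSeq TA TB (n + 1) m k) y)
        (orderedSimplex TA TB (n + 1)) := by
    intro k y hy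
    exact ((continuous_const.sub (continuous_const.mul (hcontExt k))).continuousOn).inv₀
      (hden k y hy)
  have hfcont : ContinuousOn f (orderedSimplex TA TB (n + 1)) := by
    apply ContinuousOn.mul
    · apply ContinuousOn.add
      · apply ContinuousOn.sub
        · exact (hmgfCont (x - 1) (t x) htx).log
            (fun m hm => inv_ne_zero (hden (x - 1) (t x) htx m hm))
        · exact continuousOn_const.mul ((hmgfCont x (t x) htx).log
            (fun m hm => inv_ne_zero (hden x (t x) htx m hm)))
      · exact (hmgfCont (x + 1) (t x) htx).log
          (fun m hm => inv_ne_zero (hden (x + 1) (t x) htx m hm))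
    · exact continuousOn_finset_prod _ fun y hy =>
        hmgfCont y (t y) (ht y hy)
  have hInt : MeasureTheory.IntegrableOn f (orderedSimplex TA TB (n + 1)) volume :=
    hfcont.integrableOn_compact hScompact
  rw [← MeasureTheory.integral_indicator hSmeas]
  set e := MeasurableEquiv.piFinSuccAbove (fun _ : Fin (n + 1) => ℝ) ⟨x - 1, by omega⟩ with hedef
  have hmp : MeasureTheory.MeasurePreserving e volume volume :=
    MeasureTheory.volume_preserving_piFinSuccAbove (fun _ : Fin (n + 1) => ℝ) ⟨x - 1, by omega⟩
  set g := (orderedSimplex TA TB (n + 1)).indicator f with hgdef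
  rw [← (MeasureTheory.MeasurePreserving.symm e hmp).integral_comp e.symm.measurableEmbedding g]
  have hint2 : MeasureTheory.Integrable (g ∘ e.symm) volume :=
    ((MeasureTheory.MeasurePreserving.symm e hmp).integrable_comp_emb e.symm.measurableEmbedding).2
      ((MeasureTheory.integrable_indicator_iff hSmeas).2 hInt)
  rw [MeasureTheory.Measure.volume_eq_prod] at hint2
  have hint2' : MeasureTheory.Integrable (fun p : ℝ × (Fin n → ℝ) => g (e.symm p))
      ((volume : Measure ℝ).prod (volume : Measure (Fin n → ℝ))) := hint2
  rw [MeasureTheory.Measure.volume_eq_prod, MeasureTheory.integral_prod_symm _ hint2']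
  have hesymm : ∀ (u : ℝ) (v : Fin n → ℝ),
      e.symm (u, v) = (⟨x - 1, by omega⟩ : Fin (n + 1)).insertNth u v := by
    intro u v
    simp [hedef, Fin.insertNthEquiv]
  have hzero : ∀ v : Fin n → ℝ, (∫ u : ℝ, g (e.symm (u, v))) = 0 := by
    intro v
    by_cases hC : ∀ j, j ≠ x - 1 → extSeq TA TB n v j ≤ extSeq TA TB n v (j + 1)
    · have key : ∀ j, j ≤ x - 1 → TA ≤ extSeq TA TB n v j := by
        intro j
        induction j with
        | zero => intro _; simp [extSeq]
        | succ j ih => intro hj; exact le_trans (ih (by omega)) (hC j (by omega))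
      have hTA_A : TA ≤ extSeq TA TB n v (x - 1) := key (x - 1) le_rfl
      have hmem : ∀ u : ℝ, ((⟨x - 1, by omega⟩ : Fin (n + 1)).insertNth u v ∈
          orderedSimplex TA TB (n + 1)) ↔
          u ∈ Set.Icc (extSeq TA TB n v (x - 1)) (extSeq TA TB n v x) := by
        intro u
        rw [insertNth_mem_simplex_iff TA TB n x hx1 hxN u v]
        constructor
        · rintro ⟨-, h2, h3⟩; exact ⟨h2, h3⟩
        · rintro ⟨h2, h3⟩; exact ⟨hC, h2, h3⟩
      have hre : ∀ u : ℝ, g (e.symm (u, v)) =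
          (Set.Icc (extSeq TA TB n v (x - 1)) (extSeq TA TB n v x)).indicator
            (fun w => f ((⟨x - 1, by omega⟩ : Fin (n + 1)).insertNth w v)) u := by
        intro u
        rw [hesymm u v, hgdef]
        by_cases hu : u ∈ Set.Icc (extSeq TA TB n v (x - 1)) (extSeq TA TB n v x)
        · rw [Set.indicator_of_mem hu, Set.indicator_of_mem ((hmem u).2 hu)]
        · rw [Set.indicator_of_notMem hu, Set.indicator_of_notMem (fun hh => hu ((hmem u).1 hh))]
      simp_rw [hre]
      rw [MeasureTheory.integral_indicator measurableSet_Icc]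
      rcases le_or_gt (extSeq TA TB n v (x - 1)) (extSeq TA TB n v x) with hABle | hABlt
      · have hfu : ∀ u : ℝ, f ((⟨x - 1, by omega⟩ : Fin (n + 1)).insertNth u v) =
            (Real.log (expMGF (extSeq TA TB n v (x - 1)) (t x)) -
              2 * Real.log (expMGF u (t x)) +
              Real.log (expMGF (extSeq TA TB n v x) (t x))) *
            (expMGF u (t x) *
              ∏ y ∈ (Finset.Icc 1 (n + 1)).erase x,
                expMGF (if y < x then extSeq TA TB n v y else extSeq TA TB n v (y - 1)) (t y)) := by
          intro u
          have e1 : extSeq TA TB (n + 1) ((⟨x - 1, by omega⟩ : Fin (n + 1)).insertNth u v)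
              (x - 1) = extSeq TA TB n v (x - 1) := by
            rw [extSeq_insertNth TA TB n x hx1 hxN, if_neg (by omega), if_pos (by omega)]
          have e2 : extSeq TA TB (n + 1) ((⟨x - 1, by omega⟩ : Fin (n + 1)).insertNth u v)
              x = u := by
            rw [extSeq_insertNth TA TB n x hx1 hxN, if_pos rfl]
          have e3 : extSeq TA TB (n + 1) ((⟨x - 1, by omega⟩ : Fin (n + 1)).insertNth u v)
              (x + 1) = extSeq TA TB n v x := by
            rw [extSeq_insertNth TA TB n x hx1 hxN, if_neg (by omega), if_neg (by omega)]
            rfl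
          have e4 : ∏ y ∈ Finset.Icc 1 (n + 1),
              expMGF (extSeq TA TB (n + 1)
                ((⟨x - 1, by omega⟩ : Fin (n + 1)).insertNth u v) y) (t y)
              = expMGF u (t x) *
                ∏ y ∈ (Finset.Icc 1 (n + 1)).erase x,
                  expMGF (if y < x then extSeq TA TB n v y else extSeq TA TB n v (y - 1)) (t y) := by
            rw [← Finset.mul_prod_erase (Finset.Icc 1 (n + 1)) _
              (Finset.mem_Icc.mpr ⟨hx1, hxN⟩), e2]
            congr 1
            refine Finset.prod_congr rfl fun y hy => ?_
            have hyx : y ≠ x := (Finset.mem_erase.mp hy).1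
            rw [extSeq_insertNth TA TB n x hx1 hxN, if_neg hyx]
          simp only [hfdef]
          rw [e1, e2, e3, e4]
        simp_rw [hfu]
        rw [MeasureTheory.integral_Icc_eq_integral_Ioc, ← intervalIntegral.integral_of_le hABle]
        exact core_integral_zero (t x) htx _ _ _ (lt_of_lt_of_le hA hTA_A) hABle
      · rw [Set.Icc_eq_empty (not_le.mpr hABlt), MeasureTheory.Measure.restrict_empty,
          MeasureTheory.integral_zero_measure]
    · have hzz : ∀ u : ℝ, g (e.symm (u, v)) = 0 := by
        intro u
        rw [hesymm u v, hgdef]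
        apply Set.indicator_of_notMem
        rw [insertNth_mem_simplex_iff TA TB n x hx1 hxN u v]
        rintro ⟨h1, -⟩
        exact hC h1
      simp only [hzz, MeasureTheory.integral_zero]
  simp only [hzero, MeasureTheory.integral_zero]
end
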